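/- Fix k ≥ 2. For every A ∈ ℂ^{4∗}⊗ℂ^{k∗}⊗ℂ^{2k+2} and every S ∈ S²ℂ⁴⊗Λ²ℂ^k, the following are equivalent: (i) ξ(A, S) = 0; (ii) ⟨dγ|_A(B), S⟩ = 0 for every B ∈ ℂ^{4∗}⊗ℂ^{k∗}⊗ℂ^{2k+2}, where dγ|_A(B) = γ(A + B) − γ(A) − γ(B) is the differential of the quadratic map γ at A evaluated at B, and ⟨·,·⟩ is the natural duality pairing between S²ℂ^{4∗}⊗Λ²ℂ^{k∗} and S²ℂ⁴⊗Λ²ℂ^k. -/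
import Mathlib


open Matrix

/-- Admissible families: coordinate expressions of elements `S ∈ S²ℂ⁴ ⊗ Λ²ℂ^k`
(`σ j j'` is the symmetric `4×4` matrix `(σ^{jj'}_{ii'})`, skew in `(j,j')`). -/
def Admissible (k : ℕ) (σ : Fin k → Fin k → Matrix (Fin 4) (Fin 4) ℂ) : Prop :=
  (∀ i j, (σ i j)ᵀ = σ i j) ∧ (∀ i j, σ i j = -σ j i)

/-- The Gram coefficients `ω(h_l, h_{l'})` of the standard symplectic form on `ℂ^{2k+2}`,
`ω(h, h') = Σ_{i=1}^{k+1} (h_i h'_{k+1+i} − h_{k+1+i} h'_i)`. -/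
def omegaJ (k : ℕ) : Fin (2 * k + 2) → Fin (2 * k + 2) → ℂ := fun l l' =>
  if (l : ℕ) + (k + 1) = (l' : ℕ) then 1
  else if (l' : ℕ) + (k + 1) = (l : ℕ) then -1 else 0

/-- The bilinear map `ξ : (ℂ^{4∗}⊗ℂ^{k∗}⊗ℂ^{2k+2}) × (S²ℂ⁴⊗Λ²ℂ^k) → ℂ⁴⊗ℂ^k⊗ℂ^{2k+2}`
in coordinates: `ξ(A, S)_{a c l} = 4 Σ_{i,j} A^l_{ij} σ^{jc}_{ia}` for `S` encoded by the
admissible family `σ`. -/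
noncomputable def xiMap (k : ℕ) (A : Fin 4 → Fin k → Fin (2 * k + 2) → ℂ)
    (σ : Fin k → Fin k → Matrix (Fin 4) (Fin 4) ℂ) :
    Fin 4 → Fin k → Fin (2 * k + 2) → ℂ :=
  fun a c l => 4 * ∑ i, ∑ j, A i j l * σ j c i a

/-- The coordinates (symmetric in `(i,i')`, skew in `(j,j')`) of the quadratic map
`γ(A) = Σ (1/2) ω(h_l, h_{l'}) A^l_{ij} A^{l'}_{i'j'} (f_i* f_{i'}*) ⊗ (b_j* ∧ b_{j'}*)`. -/
noncomputable def gammaC (k : ℕ) (A : Fin 4 → Fin k → Fin (2 * k + 2) → ℂ) :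
    Fin 4 → Fin 4 → Fin k → Fin k → ℂ :=
  fun i i' j j' => (1 / 4) * ∑ l, ∑ l', omegaJ k l l' *
    (A i j l * A i' j' l' + A i' j l * A i j' l')

/-- The differential `dγ|_A(B) = γ(A + B) − γ(A) − γ(B)` of `γ` at `A`. -/
noncomputable def dgamma (k : ℕ) (A B : Fin 4 → Fin k → Fin (2 * k + 2) → ℂ) :
    Fin 4 → Fin 4 → Fin k → Fin k → ℂ :=
  fun i i' j j' => gammaC k (A + B) i i' j j' - gammaC k A i i' j j' - gammaC k B i i' j j'

/-- The natural duality pairing between `S²ℂ^{4∗}⊗Λ²ℂ^{k∗}` and `S²ℂ⁴⊗Λ²ℂ^k` in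
coordinates: full contraction of the coefficient arrays. -/
noncomputable def pairSS (k : ℕ) (T : Fin 4 → Fin 4 → Fin k → Fin k → ℂ)
    (σ : Fin k → Fin k → Matrix (Fin 4) (Fin 4) ℂ) : ℂ :=
  ∑ i, ∑ i', ∑ j, ∑ j', T i i' j j' * σ j j' i i'

/-- For every `A ∈ ℂ^{4∗}⊗ℂ^{k∗}⊗ℂ^{2k+2}` and every
`S ∈ S²ℂ⁴⊗Λ²ℂ^k` (encoded by the admissible family `σ`):
`ξ(A, S) = 0` iff `⟨dγ|_A(B), S⟩ = 0` for every `B`. -/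
/- ---------------- auxiliary lemmas ---------------- -/

lemma omegaJ_skew (k : ℕ) (l l' : Fin (2 * k + 2)) : omegaJ k l' l = - omegaJ k l l' := by
  rcases l with ⟨l, hl⟩
  rcases l' with ⟨l', hl'⟩
  unfold omegaJ
  simp only [Fin.val_mk]
  split_ifs <;> first | omega | norm_num

lemma dgamma_eq (k : ℕ) (A B : Fin 4 → Fin k → Fin (2 * k + 2) → ℂ)
    (i i' : Fin 4) (j j' : Fin k) :
    dgamma k A B i i' j j' = (1 / 4) * ∑ l, ∑ l', omegaJ k l l' *
      (A i j l * B i' j' l' + B i j l * A i' j' l'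
        + A i' j l * B i j' l' + B i' j l * A i j' l') := by
  unfold dgamma gammaC
  simp only [Pi.add_apply]
  rw [← mul_sub, ← mul_sub]
  congr 1
  rw [← Finset.sum_sub_distrib, ← Finset.sum_sub_distrib]
  refine Finset.sum_congr rfl fun l _ => ?_
  rw [← Finset.sum_sub_distrib, ← Finset.sum_sub_distrib]
  exact Finset.sum_congr rfl fun l' _ => by ring


lemma sum_swap4 {α β : Type*} [Fintype α] [Fintype β] (f : α → α → β → β → ℂ) :
    (∑ x, ∑ y, ∑ z, ∑ w, f x y z w) = ∑ x, ∑ y, ∑ z, ∑ w, f y x w z :=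
  calc (∑ x, ∑ y, ∑ z, ∑ w, f x y z w) = ∑ x, ∑ y, ∑ z, ∑ w, f y x z w := Finset.sum_comm
    _ = ∑ x, ∑ y, ∑ z, ∑ w, f y x w z :=
      Finset.sum_congr rfl fun _ _ => Finset.sum_congr rfl fun _ _ => Finset.sum_comm

lemma sum_swap6 {α β γ : Type*} [Fintype α] [Fintype β] [Fintype γ]
    (f : α → α → β → β → γ → γ → ℂ) :
    (∑ i, ∑ i', ∑ j, ∑ j', ∑ l, ∑ l', f i i' j j' l l')
      = ∑ i, ∑ i', ∑ j, ∑ j', ∑ l, ∑ l', f i' i j' j l' l :=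
  calc (∑ i, ∑ i', ∑ j, ∑ j', ∑ l, ∑ l', f i i' j j' l l')
      = ∑ i, ∑ i', ∑ j, ∑ j', ∑ l, ∑ l', f i' i j j' l l' := Finset.sum_comm
    _ = ∑ i, ∑ i', ∑ j, ∑ j', ∑ l, ∑ l', f i' i j' j l' l :=
      Finset.sum_congr rfl fun _ _ => Finset.sum_congr rfl fun _ _ =>
        sum_swap4 (fun j j' l l' => f _ _ j j' l l')

lemma sum_swapI {α β γ : Type*} [Fintype α] [Fintype β] [Fintype γ]
    (f : α → α → β → β → γ → γ → ℂ) :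
    (∑ i, ∑ i', ∑ j, ∑ j', ∑ l, ∑ l', f i i' j j' l l')
      = ∑ i, ∑ i', ∑ j, ∑ j', ∑ l, ∑ l', f i' i j j' l l' := Finset.sum_comm

lemma sum_swapJL {α β γ : Type*} [Fintype α] [Fintype β] [Fintype γ]
    (f : α → α → β → β → γ → γ → ℂ) :
    (∑ i, ∑ i', ∑ j, ∑ j', ∑ l, ∑ l', f i i' j j' l l')
      = ∑ i, ∑ i', ∑ j, ∑ j', ∑ l, ∑ l', f i i' j' j l' l :=
  Finset.sum_congr rfl fun _ _ => Finset.sum_congr rfl fun _ _ =>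
    sum_swap4 (fun j j' l l' => f _ _ j j' l l')

lemma sum_reorder6 {α β γ δ ε ζ : Type*} [Fintype α] [Fintype β] [Fintype γ] [Fintype δ]
    [Fintype ε] [Fintype ζ] (f : α → β → γ → δ → ε → ζ → ℂ) :
    (∑ b : β, ∑ d : δ, ∑ e : ε, ∑ z : ζ, ∑ a : α, ∑ c : γ, f a b c d e z)
      = ∑ a : α, ∑ b : β, ∑ c : γ, ∑ d : δ, ∑ e : ε, ∑ z : ζ, f a b c d e z := by
  have h1 : (∑ b : β, ∑ d : δ, ∑ e : ε, ∑ z : ζ, ∑ a : α, ∑ c : γ, f a b c d e z)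
      = ∑ p : β × δ × ε × ζ × α × γ, f p.2.2.2.2.1 p.1 p.2.2.2.2.2 p.2.1 p.2.2.1 p.2.2.2.1 := by
    simp [Fintype.sum_prod_type]
  have h2 : (∑ a : α, ∑ b : β, ∑ c : γ, ∑ d : δ, ∑ e : ε, ∑ z : ζ, f a b c d e z)
      = ∑ q : α × β × γ × δ × ε × ζ, f q.1 q.2.1 q.2.2.1 q.2.2.2.1 q.2.2.2.2.1 q.2.2.2.2.2 := by
    simp [Fintype.sum_prod_type]
  rw [h1, h2]
  exact Fintype.sum_equiv
    { toFun := fun p => (p.2.2.2.2.1, p.1, p.2.2.2.2.2, p.2.1, p.2.2.1, p.2.2.2.1),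
      invFun := fun q => (q.2.1, q.2.2.2.1, q.2.2.2.2.1, q.2.2.2.2.2, q.1, q.2.2.1),
      left_inv := fun p => rfl, right_inv := fun q => rfl } _ _ (fun p => rfl)

lemma key_identity (k : ℕ) (A B : Fin 4 → Fin k → Fin (2 * k + 2) → ℂ)
    (σ : Fin k → Fin k → Matrix (Fin 4) (Fin 4) ℂ) (hσ : Admissible k σ) :
    pairSS k (dgamma k A B) σ = (1 / 4) * ∑ a, ∑ c, ∑ l, ∑ l',
      omegaJ k l l' * xiMap k A σ a c l * B a c l' := by
  have hsymm : ∀ (j j' : Fin k) (i i' : Fin 4), σ j j' i' i = σ j j' i i' := by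
    intro j j' i i'
    conv_rhs => rw [← hσ.1 j j']
    rfl
  have hskew : ∀ (j j' : Fin k) (i i' : Fin 4), σ j' j i i' = -σ j j' i i' := by
    intro j j' i i'
    rw [hσ.2 j' j]
    rfl
  have hRHS : (1 / 16 : ℂ) * (∑ a, ∑ c, ∑ l, ∑ l',
      omegaJ k l l' * xiMap k A σ a c l * B a c l')
      = ∑ i, ∑ i', ∑ j, ∑ j', ∑ l, ∑ l', (1/4 : ℂ) *
          (omegaJ k l l' * (A i j l * B i' j' l') * σ j j' i i') := by
    rw [← sum_reorder6 (fun i i' j j' l l' => (1/4 : ℂ) *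
          (omegaJ k l l' * (A i j l * B i' j' l') * σ j j' i i'))]
    unfold xiMap
    simp only [Finset.mul_sum, Finset.sum_mul]
    refine Finset.sum_congr rfl fun i' _ => Finset.sum_congr rfl fun j' _ =>
      Finset.sum_congr rfl fun l _ => Finset.sum_congr rfl fun l' _ => ?_
    refine Finset.sum_congr rfl fun i _ => Finset.sum_congr rfl fun j _ => by ring
  have hLHS : pairSS k (dgamma k A B) σ
      = (∑ i, ∑ i', ∑ j, ∑ j', ∑ l, ∑ l', (1/4 : ℂ) *
          (omegaJ k l l' * (A i j l * B i' j' l') * σ j j' i i'))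
        + (∑ i, ∑ i', ∑ j, ∑ j', ∑ l, ∑ l', (1/4 : ℂ) *
          (omegaJ k l l' * (B i j l * A i' j' l') * σ j j' i i'))
        + (∑ i, ∑ i', ∑ j, ∑ j', ∑ l, ∑ l', (1/4 : ℂ) *
          (omegaJ k l l' * (A i' j l * B i j' l') * σ j j' i i'))
        + (∑ i, ∑ i', ∑ j, ∑ j', ∑ l, ∑ l', (1/4 : ℂ) *
          (omegaJ k l l' * (B i' j l * A i j' l') * σ j j' i i')) := by
    unfold pairSS
    simp only [← Finset.sum_add_distrib]
    refine Finset.sum_congr rfl fun i _ => Finset.sum_congr rfl fun i' _ =>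
      Finset.sum_congr rfl fun j _ => Finset.sum_congr rfl fun j' _ => ?_
    rw [dgamma_eq, mul_assoc]
    simp only [Finset.sum_mul, Finset.mul_sum]
    refine Finset.sum_congr rfl fun l _ => Finset.sum_congr rfl fun l' _ => by ring
  have hT2 : (∑ i, ∑ i', ∑ j, ∑ j', ∑ l, ∑ l', (1/4 : ℂ) *
      (omegaJ k l l' * (B i j l * A i' j' l') * σ j j' i i'))
      = ∑ i, ∑ i', ∑ j, ∑ j', ∑ l, ∑ l', (1/4 : ℂ) *
          (omegaJ k l l' * (A i j l * B i' j' l') * σ j j' i i') := by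
    rw [sum_swap6 (fun i i' j j' l l' => (1/4 : ℂ) *
      (omegaJ k l l' * (B i j l * A i' j' l') * σ j j' i i'))]
    refine Finset.sum_congr rfl fun i _ => Finset.sum_congr rfl fun i' _ =>
      Finset.sum_congr rfl fun j _ => Finset.sum_congr rfl fun j' _ =>
      Finset.sum_congr rfl fun l _ => Finset.sum_congr rfl fun l' _ => ?_
    rw [omegaJ_skew, hskew, hsymm]
    ring
  have hT3 : (∑ i, ∑ i', ∑ j, ∑ j', ∑ l, ∑ l', (1/4 : ℂ) *
      (omegaJ k l l' * (A i' j l * B i j' l') * σ j j' i i'))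
      = ∑ i, ∑ i', ∑ j, ∑ j', ∑ l, ∑ l', (1/4 : ℂ) *
          (omegaJ k l l' * (A i j l * B i' j' l') * σ j j' i i') := by
    rw [sum_swapI (fun i i' j j' l l' => (1/4 : ℂ) *
      (omegaJ k l l' * (A i' j l * B i j' l') * σ j j' i i'))]
    refine Finset.sum_congr rfl fun i _ => Finset.sum_congr rfl fun i' _ =>
      Finset.sum_congr rfl fun j _ => Finset.sum_congr rfl fun j' _ =>
      Finset.sum_congr rfl fun l _ => Finset.sum_congr rfl fun l' _ => ?_
    rw [hsymm]
  have hT4 : (∑ i, ∑ i', ∑ j, ∑ j', ∑ l, ∑ l', (1/4 : ℂ) *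
      (omegaJ k l l' * (B i' j l * A i j' l') * σ j j' i i'))
      = ∑ i, ∑ i', ∑ j, ∑ j', ∑ l, ∑ l', (1/4 : ℂ) *
          (omegaJ k l l' * (A i j l * B i' j' l') * σ j j' i i') := by
    rw [sum_swapJL (fun i i' j j' l l' => (1/4 : ℂ) *
      (omegaJ k l l' * (B i' j l * A i j' l') * σ j j' i i'))]
    refine Finset.sum_congr rfl fun i _ => Finset.sum_congr rfl fun i' _ =>
      Finset.sum_congr rfl fun j _ => Finset.sum_congr rfl fun j' _ =>
      Finset.sum_congr rfl fun l _ => Finset.sum_congr rfl fun l' _ => ?_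
    rw [omegaJ_skew, hskew]
    ring
  rw [hLHS, hT2, hT3, hT4, ← hRHS]
  ring


theorem stmt10 (k : ℕ) (hk : 2 ≤ k) (A : Fin 4 → Fin k → Fin (2 * k + 2) → ℂ)
    (σ : Fin k → Fin k → Matrix (Fin 4) (Fin 4) ℂ) (hσ : Admissible k σ) :
    xiMap k A σ = 0 ↔
      ∀ B : Fin 4 → Fin k → Fin (2 * k + 2) → ℂ, pairSS k (dgamma k A B) σ = 0 := by
  constructor
  · intro h B
    rw [key_identity k A B σ hσ, h]
    simp
  · intro H
    funext a c l
    simp only [Pi.zero_apply]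
    -- choose the symplectic partner of l
    have hl2 : (l : ℕ) < 2 * k + 2 := l.isLt
    by_cases hl : (l : ℕ) < k + 1
    · set l₀ : Fin (2 * k + 2) := ⟨(l : ℕ) + (k + 1), by omega⟩ with hl₀
      have hB := H (fun x y z => if x = a then if y = c then if z = l₀ then 1 else 0 else 0 else 0)
      rw [key_identity k A _ σ hσ] at hB
      have hsum : (∑ x, ∑ y, ∑ m, ∑ z, omegaJ k m z * xiMap k A σ x y m *
          (if x = a then if y = c then if z = l₀ then (1:ℂ) else 0 else 0 else 0))
          = ∑ m, omegaJ k m l₀ * xiMap k A σ a c m := by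
        rw [Fintype.sum_eq_single a]
        · simp only [if_pos rfl]
          rw [Fintype.sum_eq_single c]
          · simp only [if_pos rfl]
            refine Finset.sum_congr rfl fun m _ => ?_
            simp [mul_ite]
          · intro y hy
            simp [hy]
        · intro x hx
          simp [hx]
      rw [hsum] at hB
      have hzero : (∑ m, omegaJ k m l₀ * xiMap k A σ a c m) = 0 := by
        have h4 : (1 / 4 : ℂ) ≠ 0 := by norm_num
        exact (mul_eq_zero.mp hB).resolve_left h4
      rw [Fintype.sum_eq_single l] at hzero
      · have h1 : omegaJ k l l₀ = 1 := by
          unfold omegaJ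
          rw [if_pos]
          rfl
        rw [h1, one_mul] at hzero
        exact hzero
      · intro m hm
        have hm' : (m : ℕ) ≠ (l : ℕ) := fun h => hm (Fin.ext h)
        have hω : omegaJ k m l₀ = 0 := by
          unfold omegaJ
          rw [if_neg, if_neg]
          · simp only [hl₀]
            omega
          · simp only [hl₀]
            omega
        rw [hω, zero_mul]
    · set l₀ : Fin (2 * k + 2) := ⟨(l : ℕ) - (k + 1), by omega⟩ with hl₀
      have hB := H (fun x y z => if x = a then if y = c then if z = l₀ then 1 else 0 else 0 else 0)
      rw [key_identity k A _ σ hσ] at hB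
      have hsum : (∑ x, ∑ y, ∑ m, ∑ z, omegaJ k m z * xiMap k A σ x y m *
          (if x = a then if y = c then if z = l₀ then (1:ℂ) else 0 else 0 else 0))
          = ∑ m, omegaJ k m l₀ * xiMap k A σ a c m := by
        rw [Fintype.sum_eq_single a]
        · simp only [if_pos rfl]
          rw [Fintype.sum_eq_single c]
          · simp only [if_pos rfl]
            refine Finset.sum_congr rfl fun m _ => ?_
            simp [mul_ite]
          · intro y hy
            simp [hy]
        · intro x hx
          simp [hx]
      rw [hsum] at hB
      have hzero : (∑ m, omegaJ k m l₀ * xiMap k A σ a c m) = 0 := by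
        have h4 : (1 / 4 : ℂ) ≠ 0 := by norm_num
        exact (mul_eq_zero.mp hB).resolve_left h4
      rw [Fintype.sum_eq_single l] at hzero
      · have h1 : omegaJ k l l₀ = -1 := by
          unfold omegaJ
          rw [if_neg, if_pos]
          · simp only [hl₀]
            omega
          · simp only [hl₀]
            omega
        rw [h1] at hzero
        have := hzero
        linear_combination -this
      · intro m hm
        have hm' : (m : ℕ) ≠ (l : ℕ) := fun h => hm (Fin.ext h)
        have hω : omegaJ k m l₀ = 0 := by
          unfold omegaJ
          rw [if_neg, if_neg]
          · simp only [hl₀]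
            omega
          · simp only [hl₀]
            omega
        rw [hω, zero_mul]
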